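/- Let a > 0 and consider f(y) = y^{a} on [0,1]. For the β-graded mesh with nodes y_k = (k/N)^β (β ≥ 1) and the continuous piecewise-linear interpolant Π¹f interpolating f at the nodes, the L²(0,1)-error satisfies ‖f − Π¹f‖_{L²(0,1)} ≤ C · N^{−min{β(a + 1/2), 2}} for a constant C independent of N (with an arbitrarily small loss ε > 0 in the exponent in the limiting case). -/

import Mathlib

open Real MeasureTheory

private lemma mvt_rpow (r : ℝ) {u v : ℝ} (hu : 0 < u) (huv : u < v) :
    ∃ ξ ∈ Set.Ioo u v, v ^ r - u ^ r = r * ξ ^ (r - 1) * (v - u) := by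
  obtain ⟨ξ, hξ, h⟩ := exists_hasDerivAt_eq_slope (fun x => x ^ r) (fun x => r * x ^ (r - 1)) huv
    (fun x hx => (Real.continuousAt_rpow_const x r
      (Or.inl (ne_of_gt (lt_of_lt_of_le hu hx.1)))).continuousWithinAt)
    (fun x hx => Real.hasDerivAt_rpow_const (Or.inl (ne_of_gt (hu.trans hx.1))))
  refine ⟨ξ, hξ, ?_⟩
  have hvu : v - u ≠ 0 := sub_ne_zero.2 huv.ne'
  field_simp at h
  linarith [h]

private lemma abs_rpow_sub_le {r p q x z : ℝ} (hp : 0 < p)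
    (hx : x ∈ Set.Icc p q) (hz : z ∈ Set.Icc p q) :
    |x ^ r - z ^ r| ≤ |q ^ r - p ^ r| := by
  have hx0 : 0 < x := lt_of_lt_of_le hp hx.1
  have hz0 : 0 < z := lt_of_lt_of_le hp hz.1
  rcases le_or_gt 0 r with hr | hr
  · have h1 : p ^ r ≤ x ^ r := Real.rpow_le_rpow hp.le hx.1 hr
    have h2 : x ^ r ≤ q ^ r := Real.rpow_le_rpow hx0.le hx.2 hr
    have h3 : p ^ r ≤ z ^ r := Real.rpow_le_rpow hp.le hz.1 hr
    have h4 : z ^ r ≤ q ^ r := Real.rpow_le_rpow hz0.le hz.2 hr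
    rw [abs_of_nonneg (by linarith : (0:ℝ) ≤ q ^ r - p ^ r)]
    rw [abs_le]; constructor <;> linarith
  · have h1 : x ^ r ≤ p ^ r := Real.rpow_le_rpow_of_nonpos hp hx.1 hr.le
    have h2 : q ^ r ≤ x ^ r := Real.rpow_le_rpow_of_nonpos hx0 hx.2 hr.le
    have h3 : z ^ r ≤ p ^ r := Real.rpow_le_rpow_of_nonpos hp hz.1 hr.le
    have h4 : q ^ r ≤ z ^ r := Real.rpow_le_rpow_of_nonpos hz0 hz.2 hr.le
    rw [abs_of_nonpos (by linarith : q ^ r - p ^ r ≤ 0)]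
    rw [abs_le]; constructor <;> linarith

private lemma interp_err {a p q y : ℝ} (ha : 0 < a) (hp : 0 < p) (hpq : p < q)
    (hy : y ∈ Set.Ioc p q) :
    |y ^ a - (p ^ a + (y - p) * (q ^ a - p ^ a) / (q - p))| ≤
      a * |q ^ (a - 1) - p ^ (a - 1)| * (q - p) := by
  have hqp : q - p ≠ 0 := sub_ne_zero.2 hpq.ne'
  obtain ⟨ξ₁, hξ₁, e₁⟩ := mvt_rpow a hp hy.1
  obtain ⟨ξ₂, hξ₂, e₂⟩ := mvt_rpow a hp hpq
  have key : y ^ a - (p ^ a + (y - p) * (q ^ a - p ^ a) / (q - p)) =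
      (y - p) * a * (ξ₁ ^ (a - 1) - ξ₂ ^ (a - 1)) := by
    rw [e₂]
    field_simp
    nlinarith [e₁]
  rw [key, abs_mul, abs_mul]
  have hyp : |y - p| = y - p := abs_of_pos (by linarith [hy.1])
  have hyq : y - p ≤ q - p := by linarith [hy.2]
  have habs : |ξ₁ ^ (a - 1) - ξ₂ ^ (a - 1)| ≤ |q ^ (a - 1) - p ^ (a - 1)| :=
    abs_rpow_sub_le hp ⟨hξ₁.1.le, le_trans hξ₁.2.le hy.2⟩ ⟨hξ₂.1.le, hξ₂.2.le⟩
  rw [hyp, abs_of_pos ha]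
  calc (y - p) * a * |ξ₁ ^ (a - 1) - ξ₂ ^ (a - 1)|
      ≤ (q - p) * a * |q ^ (a - 1) - p ^ (a - 1)| := by
        apply mul_le_mul
        · exact mul_le_mul_of_nonneg_right hyq ha.le
        · exact habs
        · exact abs_nonneg _
        · exact mul_nonneg (by linarith) ha.le
    _ = a * |q ^ (a - 1) - p ^ (a - 1)| * (q - p) := by ring



/-- discrete increment bound: |k^r - (k-1)^r| ≤ |r| 2^|r-1| k^(r-1) for k ≥ 2. -/
private lemma inc_bound (r : ℝ) {k : ℕ} (hk : 2 ≤ k) :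
    |(k : ℝ) ^ r - ((k : ℝ) - 1) ^ r| ≤ |r| * 2 ^ |r - 1| * (k : ℝ) ^ (r - 1) := by
  have hk2 : (2 : ℝ) ≤ (k : ℝ) := by exact_mod_cast hk
  have hk1 : (0 : ℝ) < (k : ℝ) - 1 := by linarith
  have hk0 : (0 : ℝ) < (k : ℝ) := by linarith
  obtain ⟨ξ, hξ, e⟩ := mvt_rpow r hk1 (by linarith : (k:ℝ) - 1 < k)
  have hξ0 : 0 < ξ := hk1.trans hξ.1
  have hbound : ξ ^ (r - 1) ≤ 2 ^ |r - 1| * (k : ℝ) ^ (r - 1) := by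
    rcases le_or_gt 0 (r - 1) with hr | hr
    · have h1 : ξ ^ (r - 1) ≤ (k : ℝ) ^ (r - 1) := Real.rpow_le_rpow hξ0.le hξ.2.le hr
      have h2 : (1:ℝ) ≤ 2 ^ |r - 1| := by
        rw [← Real.rpow_zero 2]
        exact Real.rpow_le_rpow_of_exponent_le one_le_two (abs_nonneg _)
      nlinarith [Real.rpow_nonneg hk0.le (r - 1)]
    · have h1 : ξ ^ (r - 1) ≤ ((k : ℝ) / 2) ^ (r - 1) := by
        apply Real.rpow_le_rpow_of_nonpos (by linarith) (by linarith [hξ.1]) hr.le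
      have h2 : ((k : ℝ) / 2) ^ (r - 1) = 2 ^ |r - 1| * (k : ℝ) ^ (r - 1) := by
        rw [Real.div_rpow hk0.le (by norm_num), abs_of_neg hr,
          Real.rpow_neg (by norm_num : (0:ℝ) ≤ 2), div_eq_mul_inv]
        ring
      linarith
  rw [e]
  have : |r * ξ ^ (r - 1) * ((k:ℝ) - ((k:ℝ) - 1))| = |r| * ξ ^ (r - 1) := by
    rw [abs_mul, abs_mul, abs_of_nonneg (Real.rpow_nonneg hξ0.le _)]
    simp
  rw [this]
  calc |r| * ξ ^ (r - 1) ≤ |r| * (2 ^ |r - 1| * (k : ℝ) ^ (r - 1)) :=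
        mul_le_mul_of_nonneg_left hbound (abs_nonneg _)
    _ = |r| * 2 ^ |r - 1| * (k : ℝ) ^ (r - 1) := by ring

private lemma sum_rpow_le (σ ε : ℝ) (hε : 0 < ε) : ∃ C : ℝ, 0 < C ∧ ∀ N : ℕ, 1 ≤ N →
    ∑ k ∈ Finset.Icc 1 N, (k : ℝ) ^ σ ≤ C * (N : ℝ) ^ (max (σ + 1) 0 + ε) := by
  set τ := max (σ + 1) 0 + ε with hτ
  have hτ0 : 0 ≤ τ := add_nonneg (le_max_right _ _) hε.le
  have hστ : σ - τ < -1 := by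
    have := le_max_left (σ + 1) 0
    simp only [hτ]; linarith
  have hsum : Summable (fun n : ℕ => (n : ℝ) ^ (σ - τ)) := Real.summable_nat_rpow.2 hστ
  refine ⟨(∑' n : ℕ, (n : ℝ) ^ (σ - τ)) + 1, by
    have := tsum_nonneg (L := SummationFilter.unconditional ℕ) (fun n : ℕ => Real.rpow_nonneg (Nat.cast_nonneg n) (σ - τ)); linarith,
    fun N hN => ?_⟩
  have hN0 : (0 : ℝ) < (N : ℝ) := by exact_mod_cast hN
  calc ∑ k ∈ Finset.Icc 1 N, (k : ℝ) ^ σ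
      ≤ ∑ k ∈ Finset.Icc 1 N, (k : ℝ) ^ (σ - τ) * (N : ℝ) ^ τ := by
        apply Finset.sum_le_sum
        intro k hk
        have hk1 : 1 ≤ k := (Finset.mem_Icc.1 hk).1
        have hkN : k ≤ N := (Finset.mem_Icc.1 hk).2
        have hk0 : (0 : ℝ) < (k : ℝ) := by exact_mod_cast hk1
        have : (k : ℝ) ^ σ = (k : ℝ) ^ (σ - τ) * (k : ℝ) ^ τ := by
          rw [← Real.rpow_add hk0]; ring_nf
        rw [this]
        exact mul_le_mul_of_nonneg_left
          (Real.rpow_le_rpow hk0.le (by exact_mod_cast hkN) hτ0)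
          (Real.rpow_nonneg hk0.le _)
    _ = (∑ k ∈ Finset.Icc 1 N, (k : ℝ) ^ (σ - τ)) * (N : ℝ) ^ τ := by
        rw [Finset.sum_mul]
    _ ≤ ((∑' n : ℕ, (n : ℝ) ^ (σ - τ)) + 1) * (N : ℝ) ^ τ := by
        apply mul_le_mul_of_nonneg_right _ (Real.rpow_nonneg hN0.le _)
        have := Summable.sum_le_tsum (Finset.Icc 1 N)
          (fun i _ => Real.rpow_nonneg (Nat.cast_nonneg i) (σ - τ)) hsum
        linarith


private lemma integral_sq_le {g : ℝ → ℝ} {p q B : ℝ} (hpq : p ≤ q) (hg : Continuous g)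
    (hB : ∀ y ∈ Set.Ioc p q, |g y| ≤ B) :
    (∫ y in Set.Ioc p q, (g y) ^ 2) ≤ B ^ 2 * (q - p) := by
  have h := MeasureTheory.norm_setIntegral_le_of_norm_le_const (μ := volume)
    (s := Set.Ioc p q) (f := fun y => (g y) ^ 2) (C := B ^ 2)
    measure_Ioc_lt_top
    (fun y hy => by
      rw [Real.norm_eq_abs, abs_pow]
      exact pow_le_pow_left₀ (abs_nonneg _) (hB y hy) 2)
  rw [Real.volume_real_Ioc_of_le hpq] at h
  exact le_trans (le_abs_self _) h

private lemma cont_rpow {a : ℝ} (ha : 0 < a) : Continuous fun y : ℝ => y ^ a :=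
  continuous_iff_continuousAt.2 fun x => Real.continuousAt_rpow_const x a (Or.inr ha.le)






private lemma term_bound (a β : ℝ) (ha : 0 < a) (hβ : 1 ≤ β) {N k : ℕ} (hN : 1 ≤ N)
    (hk : 2 ≤ k) :
    (∫ y in Set.Ioc ((((k:ℝ) - 1)/N) ^ β) (((k:ℝ)/N) ^ β),
          (y ^ a - (((((k:ℝ) - 1)/N) ^ β) ^ a +
            (y - (((k:ℝ) - 1)/N) ^ β) *
              ((((k:ℝ)/N) ^ β) ^ a - ((((k:ℝ) - 1)/N) ^ β) ^ a) /
              (((k:ℝ)/N) ^ β - (((k:ℝ) - 1)/N) ^ β)))^2)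
      ≤ ((a * (|β*(a-1)| * 2 ^ |β*(a-1) - 1|) * (β * 2 ^ |β - 1|))^2 * (β * 2 ^ |β - 1|)) *
          (k : ℝ) ^ (β*(2*a+1) - 5) * (N : ℝ) ^ (-(β*(2*a+1))) := by
  have hβ0 : 0 < β := by linarith
  have hN0 : (0:ℝ) < (N:ℝ) := by exact_mod_cast hN
  have hk2 : (2:ℝ) ≤ (k:ℝ) := by exact_mod_cast hk
  have hk0 : (0:ℝ) < (k:ℝ) := by linarith
  have hk1 : (0:ℝ) < (k:ℝ) - 1 := by linarith
  set u : ℝ := ((k:ℝ) - 1)/N with hu_def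
  set v : ℝ := (k:ℝ)/N with hv_def
  have hu : 0 < u := div_pos hk1 hN0
  have huv : u < v := by
    rw [hu_def, hv_def, div_lt_div_iff_of_pos_right hN0]
    linarith
  have hp : 0 < u ^ β := Real.rpow_pos_of_pos hu β
  have hpq : u ^ β < v ^ β := Real.rpow_lt_rpow hu.le huv hβ0
  set r : ℝ := β * (a - 1) with hr_def
  set c1 : ℝ := |r| * 2 ^ |r - 1| with hc1_def
  set c2 : ℝ := β * 2 ^ |β - 1| with hc2_def
  have hc1 : 0 ≤ c1 := mul_nonneg (abs_nonneg _) (Real.rpow_nonneg (by norm_num) _)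
  have hc2 : 0 ≤ c2 := mul_nonneg hβ0.le (Real.rpow_nonneg (by norm_num) _)
  set K1 : ℝ := (k:ℝ) ^ (r - 1) * (N:ℝ) ^ (-r) with hK1_def
  set K2 : ℝ := (k:ℝ) ^ (β - 1) * (N:ℝ) ^ (-β) with hK2_def
  have hK1 : 0 ≤ K1 := mul_nonneg (Real.rpow_nonneg hk0.le _) (Real.rpow_nonneg hN0.le _)
  have hK2 : 0 ≤ K2 := mul_nonneg (Real.rpow_nonneg hk0.le _) (Real.rpow_nonneg hN0.le _)
  -- bound q - p
  have hsub : v ^ β - u ^ β ≤ c2 * K2 := by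
    have e1 : u ^ β = ((k:ℝ) - 1) ^ β * (N:ℝ) ^ (-β) := by
      rw [hu_def, Real.div_rpow hk1.le hN0.le, Real.rpow_neg hN0.le, div_eq_mul_inv]
    have e2 : v ^ β = (k:ℝ) ^ β * (N:ℝ) ^ (-β) := by
      rw [hv_def, Real.div_rpow hk0.le hN0.le, Real.rpow_neg hN0.le, div_eq_mul_inv]
    have hinc := inc_bound β hk
    have habs : (k:ℝ) ^ β - ((k:ℝ) - 1) ^ β ≤ c2 * (k:ℝ) ^ (β - 1) := by
      have := le_abs_self ((k:ℝ) ^ β - ((k:ℝ) - 1) ^ β)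
      rw [hc2_def]
      calc (k:ℝ) ^ β - ((k:ℝ) - 1) ^ β ≤ |(k:ℝ) ^ β - ((k:ℝ) - 1) ^ β| := this
        _ ≤ |β| * 2 ^ |β - 1| * (k:ℝ) ^ (β - 1) := hinc
        _ = β * 2 ^ |β - 1| * (k:ℝ) ^ (β - 1) := by rw [abs_of_pos hβ0]
        _ = β * 2 ^ |β - 1| * (k:ℝ) ^ (β - 1) := rfl
    rw [e1, e2, hK2_def]
    calc (k:ℝ) ^ β * (N:ℝ) ^ (-β) - ((k:ℝ) - 1) ^ β * (N:ℝ) ^ (-β)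
        = ((k:ℝ) ^ β - ((k:ℝ) - 1) ^ β) * (N:ℝ) ^ (-β) := by ring
      _ ≤ c2 * (k:ℝ) ^ (β - 1) * (N:ℝ) ^ (-β) :=
          mul_le_mul_of_nonneg_right habs (Real.rpow_nonneg hN0.le _)
      _ = c2 * ((k:ℝ) ^ (β - 1) * (N:ℝ) ^ (-β)) := by ring
  -- bound |q^(a-1) - p^(a-1)|
  have hD : |(v ^ β) ^ (a - 1) - (u ^ β) ^ (a - 1)| ≤ c1 * K1 := by
    have e1 : (u ^ β) ^ (a - 1) = ((k:ℝ) - 1) ^ r * (N:ℝ) ^ (-r) := by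
      rw [← Real.rpow_mul hu.le, ← hr_def, hu_def, Real.div_rpow hk1.le hN0.le,
        Real.rpow_neg hN0.le, div_eq_mul_inv]
    have e2 : (v ^ β) ^ (a - 1) = (k:ℝ) ^ r * (N:ℝ) ^ (-r) := by
      rw [← Real.rpow_mul (hu.trans huv).le, ← hr_def, hv_def,
        Real.div_rpow hk0.le hN0.le, Real.rpow_neg hN0.le, div_eq_mul_inv]
    rw [e1, e2, hK1_def]
    calc |(k:ℝ) ^ r * (N:ℝ) ^ (-r) - ((k:ℝ) - 1) ^ r * (N:ℝ) ^ (-r)|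
        = |(k:ℝ) ^ r - ((k:ℝ) - 1) ^ r| * (N:ℝ) ^ (-r) := by
          rw [← sub_mul, abs_mul, abs_of_nonneg (Real.rpow_nonneg hN0.le _)]
      _ ≤ |r| * 2 ^ |r - 1| * (k:ℝ) ^ (r - 1) * (N:ℝ) ^ (-r) :=
          mul_le_mul_of_nonneg_right (inc_bound r hk) (Real.rpow_nonneg hN0.le _)
      _ = c1 * ((k:ℝ) ^ (r - 1) * (N:ℝ) ^ (-r)) := by rw [hc1_def]; ring
  -- pointwise bound, then integral bound
  set B : ℝ := a * |(v ^ β) ^ (a - 1) - (u ^ β) ^ (a - 1)| * (v ^ β - u ^ β) with hB_def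
  have hBnonneg : 0 ≤ B :=
    mul_nonneg (mul_nonneg ha.le (abs_nonneg _)) (by linarith)
  have hcont : Continuous fun y : ℝ => y ^ a - ((u ^ β) ^ a +
      (y - u ^ β) * ((v ^ β) ^ a - (u ^ β) ^ a) / (v ^ β - u ^ β)) := by
    apply (cont_rpow ha).sub
    continuity
  have hint : (∫ y in Set.Ioc (u ^ β) (v ^ β),
      (y ^ a - ((u ^ β) ^ a + (y - u ^ β) * ((v ^ β) ^ a - (u ^ β) ^ a) /
        (v ^ β - u ^ β)))^2) ≤ B ^ 2 * (v ^ β - u ^ β) :=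
    integral_sq_le hpq.le hcont (fun y hy => interp_err ha hp hpq hy)
  -- combine
  have hBle : B ≤ a * (c1 * K1) * (c2 * K2) := by
    rw [hB_def]
    apply mul_le_mul (mul_le_mul_of_nonneg_left hD ha.le) hsub (by linarith)
    exact mul_nonneg ha.le (mul_nonneg hc1 hK1)
  have hfinal : B ^ 2 * (v ^ β - u ^ β) ≤ (a * (c1 * K1) * (c2 * K2)) ^ 2 * (c2 * K2) := by
    apply mul_le_mul (pow_le_pow_left₀ hBnonneg hBle 2) hsub (by linarith) (sq_nonneg _)
  have ek : (k:ℝ) ^ (r - 1) * (k:ℝ) ^ (r - 1) *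
      ((k:ℝ) ^ (β - 1) * ((k:ℝ) ^ (β - 1) * (k:ℝ) ^ (β - 1))) = (k:ℝ) ^ (β*(2*a+1) - 5) := by
    simp only [← Real.rpow_add hk0]
    congr 1
    rw [hr_def]; ring
  have eN : (N:ℝ) ^ (-r) * (N:ℝ) ^ (-r) *
      ((N:ℝ) ^ (-β) * ((N:ℝ) ^ (-β) * (N:ℝ) ^ (-β))) = (N:ℝ) ^ (-(β*(2*a+1))) := by
    simp only [← Real.rpow_add hN0]
    congr 1
    rw [hr_def]; ring
  have halg : (a * (c1 * K1) * (c2 * K2)) ^ 2 * (c2 * K2) =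
      ((a * c1 * c2) ^ 2 * c2) *
        ((k:ℝ) ^ (r - 1) * (k:ℝ) ^ (r - 1) *
          ((k:ℝ) ^ (β - 1) * ((k:ℝ) ^ (β - 1) * (k:ℝ) ^ (β - 1)))) *
        ((N:ℝ) ^ (-r) * (N:ℝ) ^ (-r) *
          ((N:ℝ) ^ (-β) * ((N:ℝ) ^ (-β) * (N:ℝ) ^ (-β)))) := by
    rw [hK1_def, hK2_def]; ring
  calc (∫ y in Set.Ioc (u ^ β) (v ^ β),
      (y ^ a - ((u ^ β) ^ a + (y - u ^ β) * ((v ^ β) ^ a - (u ^ β) ^ a) /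
        (v ^ β - u ^ β)))^2)
      ≤ B ^ 2 * (v ^ β - u ^ β) := hint
    _ ≤ (a * (c1 * K1) * (c2 * K2)) ^ 2 * (c2 * K2) := hfinal
    _ = ((a * (|β*(a-1)| * 2 ^ |β*(a-1) - 1|) * (β * 2 ^ |β - 1|))^2 * (β * 2 ^ |β - 1|)) *
          (k : ℝ) ^ (β*(2*a+1) - 5) * (N : ℝ) ^ (-(β*(2*a+1))) := by
        rw [halg, ek, eN, hc1_def, hc2_def, hr_def]




private lemma term1_bound {a q : ℝ} (ha : 0 < a) (hq : 0 < q) :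
    (∫ y in Set.Ioc (0:ℝ) q, (y ^ a - y * q ^ a / q) ^ 2) ≤ q ^ a * q ^ a * q := by
  have hqa : 0 ≤ q ^ a := Real.rpow_nonneg hq.le a
  have h := integral_sq_le (g := fun y => y ^ a - y * q ^ a / q) (B := q ^ a) hq.le
    ((cont_rpow ha).sub (by continuity))
    (fun y hy => by
      show |y ^ a - y * q ^ a / q| ≤ q ^ a
      have hy0 : 0 < y := hy.1
      have h1 : 0 ≤ y ^ a := Real.rpow_nonneg hy0.le a
      have h2 : y ^ a ≤ q ^ a := Real.rpow_le_rpow hy0.le hy.2 ha.le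
      have h3 : 0 ≤ y * q ^ a / q := by positivity
      have h4 : y * q ^ a / q ≤ q ^ a := by
        rw [div_le_iff₀ hq]
        nlinarith [hy.2]
      rw [abs_le]; constructor <;> linarith)
  calc (∫ y in Set.Ioc (0:ℝ) q, (y ^ a - y * q ^ a / q) ^ 2)
      ≤ (q ^ a) ^ 2 * (q - 0) := h
    _ = q ^ a * q ^ a * q := by ring


/-- Lemma 8 (s = 0 case): L² error of the continuous piecewise-linear nodal interpolant
of y^a, a > 0, on the β-graded mesh y_k = (k/N)^β, β ≥ 1:
‖f - Π¹f‖_{L²(0,1)} ≤ C · N^{-min{β(a+1/2),2} + ε} for every ε > 0, C independent of N. -/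
theorem stmt_6 (a β : ℝ) (ha : 0 < a) (hβ : 1 ≤ β) :
    ∀ ε : ℝ, 0 < ε → ∃ C : ℝ, 0 < C ∧ ∀ N : ℕ, 1 ≤ N →
      Real.sqrt (∑ k ∈ Finset.Icc 1 N,
        ∫ y in Set.Ioc ((((k:ℝ) - 1)/N) ^ β) (((k:ℝ)/N) ^ β),
          (y ^ a - (((((k:ℝ) - 1)/N) ^ β) ^ a +
            (y - (((k:ℝ) - 1)/N) ^ β) *
              ((((k:ℝ)/N) ^ β) ^ a - ((((k:ℝ) - 1)/N) ^ β) ^ a) /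
              (((k:ℝ)/N) ^ β - (((k:ℝ) - 1)/N) ^ β)))^2)
      ≤ C * (N:ℝ) ^ (-(min (β*(a + 1/2)) 2) + ε) := by
  intro ε hε
  have hβ0 : 0 < β := lt_of_lt_of_le one_pos hβ
  obtain ⟨C₃, hC₃, hsum⟩ := sum_rpow_le (β*(2*a+1) - 5) ε hε
  set s0 : ℝ := β*(2*a+1) with hs0
  set C₂ : ℝ := (a * (|β*(a-1)| * 2 ^ |β*(a-1) - 1|) * (β * 2 ^ |β - 1|))^2 *
    (β * 2 ^ |β - 1|) with hC₂
  have hC₂0 : 0 ≤ C₂ :=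
    mul_nonneg (sq_nonneg _) (mul_nonneg hβ0.le (Real.rpow_nonneg (by norm_num) _))
  have hCC : (0:ℝ) < 1 + C₂ * C₃ := by nlinarith [mul_nonneg hC₂0 hC₃.le]
  refine ⟨Real.sqrt (1 + C₂ * C₃), Real.sqrt_pos.2 hCC, fun N hN => ?_⟩
  have hN1 : (1:ℝ) ≤ (N:ℝ) := by exact_mod_cast hN
  have hN0 : (0:ℝ) < (N:ℝ) := by linarith
  set m : ℝ := min (β*(a + 1/2)) 2 with hm
  have e2m : 2*m = min s0 4 := by
    rw [hm, hs0]
    have e : β*(2*a+1) = 2*(β*(a + 1/2)) := by ring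
    rw [e]
    rcases le_total (β*(a + 1/2)) 2 with h|h
    · rw [min_eq_left h, min_eq_left (by linarith)]
    · rw [min_eq_right h, min_eq_right (by linarith)]; norm_num
  have hexp1 : -s0 + (max (s0 - 5 + 1) 0 + ε) = -(2*m) + ε := by
    rw [e2m]
    rcases le_total s0 4 with h|h
    · rw [max_eq_right (by linarith), min_eq_left h]; ring
    · rw [max_eq_left (by linarith), min_eq_right h]; ring
  have hexp2 : -s0 ≤ -(2*m) + ε := by
    rw [e2m]
    have := min_le_left s0 4
    linarith
  set F : ℕ → ℝ := fun k =>
    ∫ y in Set.Ioc ((((k:ℝ) - 1)/N) ^ β) (((k:ℝ)/N) ^ β),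
          (y ^ a - (((((k:ℝ) - 1)/N) ^ β) ^ a +
            (y - (((k:ℝ) - 1)/N) ^ β) *
              ((((k:ℝ)/N) ^ β) ^ a - ((((k:ℝ) - 1)/N) ^ β) ^ a) /
              (((k:ℝ)/N) ^ β - (((k:ℝ) - 1)/N) ^ β)))^2 with hF
  have h1mem : (1:ℕ) ∈ Finset.Icc 1 N := Finset.mem_Icc.2 ⟨le_refl 1, hN⟩
  have hsplit : ∑ k ∈ Finset.Icc 1 N, F k = ∑ k ∈ Finset.Ioc 1 N, F k + F 1 := by
    rw [← Finset.sum_erase_add _ _ h1mem, Finset.Icc_erase_left]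
  have htail : ∑ k ∈ Finset.Ioc 1 N, F k ≤
      (C₂ * (N:ℝ)^(-s0)) * (C₃ * (N:ℝ)^(max (s0 - 5 + 1) 0 + ε)) := by
    calc ∑ k ∈ Finset.Ioc 1 N, F k
        ≤ ∑ k ∈ Finset.Ioc 1 N, (C₂ * (N:ℝ)^(-s0)) * (k:ℝ)^(s0 - 5) := by
          apply Finset.sum_le_sum
          intro k hk
          have hk2 : 2 ≤ k := (Finset.mem_Ioc.1 hk).1
          have hb := term_bound a β ha hβ hN hk2
          rw [← hC₂, ← hs0] at hb
          calc F k ≤ C₂ * (k:ℝ)^(s0 - 5) * (N:ℝ)^(-s0) := hb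
            _ = (C₂ * (N:ℝ)^(-s0)) * (k:ℝ)^(s0 - 5) := by ring
      _ = (C₂ * (N:ℝ)^(-s0)) * ∑ k ∈ Finset.Ioc 1 N, (k:ℝ)^(s0 - 5) :=
          (Finset.mul_sum _ _ _).symm
      _ ≤ (C₂ * (N:ℝ)^(-s0)) * ∑ k ∈ Finset.Icc 1 N, (k:ℝ)^(s0 - 5) := by
          apply mul_le_mul_of_nonneg_left _
            (mul_nonneg hC₂0 (Real.rpow_nonneg hN0.le _))
          exact Finset.sum_le_sum_of_subset_of_nonneg Finset.Ioc_subset_Icc_self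
            (fun i _ _ => Real.rpow_nonneg (Nat.cast_nonneg i) _)
      _ ≤ (C₂ * (N:ℝ)^(-s0)) * (C₃ * (N:ℝ)^(max (s0 - 5 + 1) 0 + ε)) :=
          mul_le_mul_of_nonneg_left (hsum N hN)
            (mul_nonneg hC₂0 (Real.rpow_nonneg hN0.le _))
  have htail2 : ∑ k ∈ Finset.Ioc 1 N, F k ≤ C₂ * C₃ * (N:ℝ)^(-(2*m) + ε) := by
    refine le_trans htail (le_of_eq ?_)
    rw [show (C₂ * (N:ℝ)^(-s0)) * (C₃ * (N:ℝ)^(max (s0 - 5 + 1) 0 + ε)) =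
      C₂ * C₃ * ((N:ℝ)^(-s0) * (N:ℝ)^(max (s0 - 5 + 1) 0 + ε)) from by ring,
      ← Real.rpow_add hN0, hexp1]
  have hq0 : (0:ℝ) < (((1:ℕ):ℝ)/N) ^ β := Real.rpow_pos_of_pos (by positivity) β
  have hF1 : F 1 ≤ (N:ℝ)^(-s0) := by
    have hzero : ((((1:ℕ):ℝ) - 1)/(N:ℝ)) ^ β = 0 := by
      norm_num [Real.zero_rpow (ne_of_gt hβ0)]
    have hq_eq : (((1:ℕ):ℝ)/N) ^ β = (N:ℝ)^(-β) := by
      rw [Nat.cast_one, one_div, Real.inv_rpow hN0.le, ← Real.rpow_neg hN0.le]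
    have hbody : F 1 = ∫ y in Set.Ioc (0:ℝ) ((((1:ℕ):ℝ)/N) ^ β),
        (y ^ a - y * ((((1:ℕ):ℝ)/N) ^ β) ^ a / ((((1:ℕ):ℝ)/N) ^ β)) ^ 2 := by
      rw [hF]
      simp only [hzero, Real.zero_rpow (ne_of_gt ha), sub_zero, zero_add]
    have hle := term1_bound ha hq0 (a := a)
    have heq : ((((1:ℕ):ℝ)/N) ^ β) ^ a * ((((1:ℕ):ℝ)/N) ^ β) ^ a * ((((1:ℕ):ℝ)/N) ^ β)
        = (N:ℝ)^(-s0) := by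
      rw [hq_eq, ← Real.rpow_mul hN0.le]
      rw [show ((N:ℝ)^(-β * a)) * ((N:ℝ)^(-β * a)) * ((N:ℝ)^(-β)) =
        (N:ℝ)^(-β * a) * ((N:ℝ)^(-β * a) * (N:ℝ)^(-β)) from by ring,
        ← Real.rpow_add hN0, ← Real.rpow_add hN0, hs0]
      congr 1
      ring
    rw [hbody, ← heq]
    exact hle
  have hterm1 : (N:ℝ)^(-s0) ≤ (N:ℝ)^(-(2*m) + ε) :=
    Real.rpow_le_rpow_of_exponent_le hN1 hexp2
  have hS : ∑ k ∈ Finset.Icc 1 N, F k ≤ (1 + C₂ * C₃) * (N:ℝ)^(-(2*m) + ε) := by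
    rw [hsplit]
    have expand : (1 + C₂ * C₃) * (N:ℝ)^(-(2*m) + ε) =
      (N:ℝ)^(-(2*m) + ε) + C₂ * C₃ * (N:ℝ)^(-(2*m) + ε) := by ring
    rw [expand]
    have := le_trans hF1 hterm1
    linarith
  have hE2 : (N:ℝ)^(-(2*m) + ε) ≤ ((N:ℝ)^(-m + ε))^2 := by
    have e : ((N:ℝ)^(-m + ε))^2 = (N:ℝ)^(-(2*m) + 2*ε) := by
      rw [← Real.rpow_natCast ((N:ℝ)^(-m + ε)) 2, ← Real.rpow_mul hN0.le]
      congr 1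
      push_cast
      ring
    rw [e]
    exact Real.rpow_le_rpow_of_exponent_le hN1 (by linarith)
  have hS2 : ∑ k ∈ Finset.Icc 1 N, F k ≤ (1 + C₂ * C₃) * ((N:ℝ)^(-m + ε))^2 :=
    le_trans hS (mul_le_mul_of_nonneg_left hE2 hCC.le)
  calc Real.sqrt (∑ k ∈ Finset.Icc 1 N, F k)
      ≤ Real.sqrt ((1 + C₂ * C₃) * ((N:ℝ)^(-m + ε))^2) := Real.sqrt_le_sqrt hS2
    _ = Real.sqrt (1 + C₂ * C₃) * (N:ℝ)^(-m + ε) := by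
        rw [Real.sqrt_mul hCC.le, Real.sqrt_sq (Real.rpow_nonneg hN0.le _)]
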